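/- If a, b, c are nonnegative integers and d is a negative integer such that P(a,b,c,d) = 0, then (a,b,c,d) equals (0,0,0,-2) or (0,0,1,-1) up to permutation of a, b, c. -/
import Mathlib


def P (a b c d : ℤ) : ℤ := a^2 + b^2 + c^2 + d^2 - 2*a*b - 2*a*c - 2*a*d - 2*b*c - 2*b*d - 2*c*d - 4*a*b*c*d - 4

theorem stmt_10 (a b c d : ℤ) (ha : 0 ≤ a) (hb : 0 ≤ b) (hc : 0 ≤ c) (hd : d < 0)
    (h : P a b c d = 0) :
    (a = 0 ∧ b = 0 ∧ c = 0 ∧ d = -2) ∨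
    (d = -1 ∧ ((a = 0 ∧ b = 0 ∧ c = 1) ∨ (a = 0 ∧ b = 1 ∧ c = 0) ∨
               (a = 1 ∧ b = 0 ∧ c = 0))) := by
  simp only [P] at h
  have hcd : -1 ≤ c * d := by nlinarith [sq_nonneg (a + b - c - d), mul_nonneg ha hb]
  have had : -1 ≤ a * d := by nlinarith [sq_nonneg (c + b - a - d), mul_nonneg hc hb]
  have hbd : -1 ≤ b * d := by nlinarith [sq_nonneg (a + c - b - d), mul_nonneg ha hc]
  rcases eq_or_lt_of_le (show d ≤ -1 by omega) with hd1 | hd2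
  · -- d = -1
    subst hd1
    have ha1 : a ≤ 1 := by nlinarith
    have hb1 : b ≤ 1 := by nlinarith
    have hc1 : c ≤ 1 := by nlinarith
    interval_cases a <;> interval_cases b <;> interval_cases c <;> omega
  · -- d ≤ -2
    have hd2' : d ≤ -2 := by omega
    have ha0 : a = 0 := by nlinarith [mul_le_mul_of_nonneg_left hd2' ha]
    have hb0 : b = 0 := by nlinarith [mul_le_mul_of_nonneg_left hd2' hb]
    have hc0 : c = 0 := by nlinarith [mul_le_mul_of_nonneg_left hd2' hc]
    subst ha0; subst hb0; subst hc0
    have : d = -2 := by nlinarith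
    left; exact ⟨rfl, rfl, rfl, this⟩
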